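/- arXiv:1409.7319 — 3 statements merged into one kernel-verified Lean document; each statement's English description precedes it below -/
import Mathlib

section
/- Let m ≥ 2 be an integer, let p₁, p₂ ∈ ℂ^m be distinct points, and let A₁, A₂ ∈ SL_m(ℂ). Then there exists an algebraic (polynomial) automorphism φ of ℂ^m such that φ(p₁) = p₁, φ(p₂) = p₂, and the differentials satisfy D_{p₁}φ = A₁ and D_{p₂}φ = A₂. -/
open Matrix

/-- A map `ℂ^σ → ℂ^τ` is polynomial (algebraic) if each component is given by
evaluation of a multivariate polynomial. -/
def IsPolyMap {σ τ : Type*} (f : (σ → ℂ) → (τ → ℂ)) : Prop :=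
  ∃ P : τ → MvPolynomial σ ℂ, ∀ x t, f x t = MvPolynomial.eval x (P t)

namespace LemA2

theorem isPolyMap_comp {σ τ υ : Type*} {f : (τ → ℂ) → (υ → ℂ)} {g : (σ → ℂ) → (τ → ℂ)}
    (hf : IsPolyMap f) (hg : IsPolyMap g) : IsPolyMap (f ∘ g) := by
  obtain ⟨P, hP⟩ := hf
  obtain ⟨Q, hQ⟩ := hg
  refine ⟨fun t => MvPolynomial.bind₁ Q (P t), fun x t => ?_⟩
  have h2 : MvPolynomial.eval x (MvPolynomial.bind₁ Q (P t))
      = MvPolynomial.eval (fun s => MvPolynomial.eval x (Q s)) (P t) :=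
    MvPolynomial.eval₂Hom_bind₁ (RingHom.id ℂ) x Q (P t)
  rw [h2, Function.comp_apply, hP]
  exact congrArg (fun y => MvPolynomial.eval y (P t)) (funext (hQ x))

theorem isPolyMap_id {σ : Type*} : IsPolyMap (id : (σ → ℂ) → (σ → ℂ)) :=
  ⟨fun t => MvPolynomial.X t, fun x t => by simp⟩

variable {m : ℕ}

/-- The bundled "good automorphism" property. -/
def Good (p₁ p₂ : Fin m → ℂ) (A₁ A₂ : Matrix (Fin m) (Fin m) ℂ) : Prop :=
  ∃ φ ψ : (Fin m → ℂ) → (Fin m → ℂ),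
    IsPolyMap φ ∧ IsPolyMap ψ ∧ ψ ∘ φ = id ∧ φ ∘ ψ = id ∧
    φ p₁ = p₁ ∧ φ p₂ = p₂ ∧
    HasFDerivAt φ (LinearMap.toContinuousLinearMap (Matrix.mulVecLin A₁)) p₁ ∧
    HasFDerivAt φ (LinearMap.toContinuousLinearMap (Matrix.mulVecLin A₂)) p₂

theorem hasFDerivAt_matrix {φ : (Fin m → ℂ) → (Fin m → ℂ)} {L : (Fin m → ℂ) →L[ℂ] (Fin m → ℂ)}
    {A : Matrix (Fin m) (Fin m) ℂ} {p : Fin m → ℂ} (h : HasFDerivAt φ L p)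
    (hL : ∀ x, L x = A.mulVec x) :
    HasFDerivAt φ (LinearMap.toContinuousLinearMap (Matrix.mulVecLin A)) p := by
  have : LinearMap.toContinuousLinearMap (Matrix.mulVecLin A) = L := by
    ext x
    simp [hL x]
  rw [this]; exact h

theorem good_one (p₁ p₂ : Fin m → ℂ) : Good p₁ p₂ 1 1 := by
  refine ⟨id, id, isPolyMap_id, isPolyMap_id, rfl, rfl, rfl, rfl, ?_, ?_⟩ <;>
  · exact hasFDerivAt_matrix (hasFDerivAt_id _) (fun x => by simp)

theorem good_swap {p₁ p₂ : Fin m → ℂ} {A₁ A₂ : Matrix (Fin m) (Fin m) ℂ}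
    (h : Good p₁ p₂ A₁ A₂) : Good p₂ p₁ A₂ A₁ := by
  obtain ⟨φ, ψ, h1, h2, h3, h4, h5, h6, h7, h8⟩ := h
  exact ⟨φ, ψ, h1, h2, h3, h4, h6, h5, h8, h7⟩

theorem good_mul {p₁ p₂ : Fin m → ℂ} {A₁ A₂ B₁ B₂ : Matrix (Fin m) (Fin m) ℂ}
    (hA : Good p₁ p₂ A₁ A₂) (hB : Good p₁ p₂ B₁ B₂) : Good p₁ p₂ (A₁ * B₁) (A₂ * B₂) := by
  obtain ⟨φa, ψa, ha1, ha2, ha3, ha4, ha5, ha6, ha7, ha8⟩ := hA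
  obtain ⟨φb, ψb, hb1, hb2, hb3, hb4, hb5, hb6, hb7, hb8⟩ := hB
  refine ⟨φa ∘ φb, ψb ∘ ψa, isPolyMap_comp ha1 hb1, isPolyMap_comp hb2 ha2, ?_, ?_, ?_, ?_, ?_, ?_⟩
  · calc (ψb ∘ ψa) ∘ (φa ∘ φb) = ψb ∘ (ψa ∘ φa) ∘ φb := by simp [Function.comp_assoc]
    _ = id := by rw [ha3]; simpa using hb3
  · calc (φa ∘ φb) ∘ (ψb ∘ ψa) = φa ∘ (φb ∘ ψb) ∘ ψa := by simp [Function.comp_assoc]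
    _ = id := by rw [hb4]; simpa using ha4
  · simp [Function.comp_apply, hb5, ha5]
  · simp [Function.comp_apply, hb6, ha6]
  · have := (hb5 ▸ ha7 : HasFDerivAt φa _ (φb p₁)).comp p₁ hb7
    exact hasFDerivAt_matrix this (fun x => by
      simp [← Matrix.mulVec_mulVec])
  · have := (hb6 ▸ ha8 : HasFDerivAt φa _ (φb p₂)).comp p₂ hb8
    exact hasFDerivAt_matrix this (fun x => by
      simp [← Matrix.mulVec_mulVec])

theorem transvection_mulVec (i j : Fin m) (c : ℂ) (x : Fin m → ℂ) :
    (Matrix.transvection i j c).mulVec x = x + (c * x j) • (Pi.single i 1 : Fin m → ℂ) := by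
  funext l
  simp only [Matrix.transvection, Matrix.add_mulVec, Matrix.one_mulVec, Matrix.smul_mulVec]
  simp [Matrix.mulVec, dotProduct, Matrix.single, Pi.single_apply, ite_and,
    mul_comm, eq_comm]

theorem good_transvection {p₁ p₂ : Fin m → ℂ} {i j : Fin m} (hij : i ≠ j)
    (hj : p₁ j ≠ p₂ j) (c : ℂ) : Good p₁ p₂ (Matrix.transvection i j c) 1 := by
  set α := p₁ j with hα
  set β := p₂ j with hβ
  set K : ℂ := ((α - β)⁻¹) ^ 2 with hK
  set g : ℂ → ℂ := fun y => K * ((y - α) * (y - β) ^ 2) with hg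
  set v : Fin m → ℂ := Pi.single i 1 with hv
  set φ : (Fin m → ℂ) → (Fin m → ℂ) := fun x => x + (c * g (x j)) • v with hφ
  set ψ : (Fin m → ℂ) → (Fin m → ℂ) := fun x => x + (-c * g (x j)) • v with hψ
  have hvj : v j = 0 := Pi.single_eq_of_ne (Ne.symm hij) 1
  have hφj : ∀ x, φ x j = x j := fun x => by simp [hφ, hvj]
  have hgα : g α = 0 := by simp [hg]
  have hgβ : g β = 0 := by simp [hg]
  have hpoly : ∀ e : ℂ, IsPolyMap (fun x : Fin m → ℂ => x + (e * g (x j)) • v) := by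
    intro e
    refine ⟨fun t => MvPolynomial.X t + (if t = i then 1 else 0) *
      (MvPolynomial.C (e * K) *
        ((MvPolynomial.X j - MvPolynomial.C α) * (MvPolynomial.X j - MvPolynomial.C β) ^ 2)),
      fun x t => ?_⟩
    have hvt : v t = if t = i then 1 else 0 := Pi.single_apply i 1 t
    simp only [Pi.add_apply, Pi.smul_apply, smul_eq_mul, hvt, hg, map_add, _root_.map_mul, map_sub,
      map_pow, MvPolynomial.eval_X, MvPolynomial.eval_C, apply_ite, _root_.map_one, _root_.map_zero]
    by_cases h : t = i <;> simp [h] <;> ring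
  have hinv : ∀ e : ℂ, (fun x : Fin m → ℂ => x + (-e * g (x j)) • v) ∘
      (fun x : Fin m → ℂ => x + (e * g (x j)) • v) = id := by
    intro e
    funext x
    have h1 : (x + (e * g (x j)) • v) j = x j := by simp [hvj]
    simp only [Function.comp_apply, h1, id_eq]
    module
  -- derivatives of g
  have hder : ∀ y : ℂ, HasDerivAt g (K * ((y - β) ^ 2 + (y - α) * (2 * (y - β)))) y := by
    intro y
    have h1 : HasDerivAt (fun y : ℂ => y - α) 1 y := (hasDerivAt_id y).sub_const α
    have h2 : HasDerivAt (fun y : ℂ => (y - β) ^ 2) (2 * (y - β)) y := by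
      simpa using ((hasDerivAt_id y).sub_const β).fun_pow 2
    have := (h1.fun_mul h2).const_mul K
    refine this.congr_deriv ?_
    ring
  have hKαβ : K * (α - β) ^ 2 = 1 := by
    have : α - β ≠ 0 := sub_ne_zero.2 hj
    rw [hK, inv_pow, inv_mul_cancel₀ (pow_ne_zero 2 this)]
  have hderα : HasDerivAt g 1 α := by
    have h := hder α
    simpa only [sub_self, zero_mul, add_zero, hKαβ] using h
  have hderβ : HasDerivAt g 0 β := by
    have h := hder β
    simpa only [sub_self, mul_zero, zero_pow, zero_add, ne_eq, OfNat.ofNat_ne_zero,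
      not_false_eq_true, mul_comm] using (by simpa using h : HasDerivAt g 0 β)
  -- main derivative computation
  have hφd : ∀ (p : Fin m → ℂ) (d : ℂ), HasDerivAt g d (p j) →
      HasFDerivAt φ (ContinuousLinearMap.id ℂ (Fin m → ℂ) +
        ((c * d) • (ContinuousLinearMap.proj j : (Fin m → ℂ) →L[ℂ] ℂ)).smulRight v) p := by
    intro p d hd
    have hproj : HasFDerivAt (fun x : Fin m → ℂ => x j)
        (ContinuousLinearMap.proj j : (Fin m → ℂ) →L[ℂ] ℂ) p := hasFDerivAt_apply j p
    have h1 : HasFDerivAt (fun x : Fin m → ℂ => g (x j))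
        (d • (ContinuousLinearMap.proj j : (Fin m → ℂ) →L[ℂ] ℂ)) p :=
      HasDerivAt.comp_hasFDerivAt (h₂ := g) p hd hproj
    have h2 := (h1.const_mul c).smul_const v
    have h3 := (hasFDerivAt_id p).add h2
    refine h3.congr_fderiv ?_
    ext x l
    simp [smul_smul, mul_assoc]
  refine ⟨φ, ψ, hpoly c, by simpa [hψ] using hpoly (-c), by simpa [hψ, hφ] using hinv c, ?_, ?_, ?_, ?_, ?_⟩
  · have h := hinv (-c)
    simpa [hψ, hφ, neg_neg] using h
  · simp [hφ, hgα]
    exact Or.inl (Or.inr hgα)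
  · simp [hφ, hgβ]
    exact Or.inl (Or.inr hgβ)
  · refine hasFDerivAt_matrix (hφd p₁ 1 (by rw [← hα]; exact hderα)) (fun x => ?_)
    rw [transvection_mulVec]
    simp [hv]
  · refine hasFDerivAt_matrix (hφd p₂ 0 (by rw [← hβ]; exact hderβ)) (fun x => ?_)
    simp

theorem mulVec_ext {M N : Matrix (Fin m) (Fin m) ℂ} (h : ∀ x, M.mulVec x = N.mulVec x) :
    M = N := by
  ext r s
  have h2 := congrFun (h (Pi.single s 1)) r
  simpa [Matrix.mulVec_single] using h2

theorem diag_pair_eq_transvections {i j : Fin m} (hij : i ≠ j) {a : ℂ} (ha : a ≠ 0) :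
    (Matrix.diagonal (fun l => if l = i then a else if l = j then a⁻¹ else 1)
      : Matrix (Fin m) (Fin m) ℂ) =
    Matrix.transvection i j a * (Matrix.transvection j i (-a⁻¹) * (Matrix.transvection i j (a-1) *
      (Matrix.transvection j i 1 * Matrix.transvection i j (-1)))) := by
  apply mulVec_ext
  intro x
  rw [← Matrix.mulVec_mulVec, ← Matrix.mulVec_mulVec, ← Matrix.mulVec_mulVec,
    ← Matrix.mulVec_mulVec]
  simp only [transvection_mulVec]
  funext l
  rcases eq_or_ne l i with rfl | hli
  · simp only [Matrix.mulVec_diagonal, if_pos rfl, Pi.add_apply, Pi.smul_apply,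
      Pi.single_apply, smul_eq_mul]
    simp [hij, hij.symm]
    field_simp
    ring
  · rcases eq_or_ne l j with rfl | hlj
    · simp only [Matrix.mulVec_diagonal, Pi.add_apply, Pi.smul_apply, Pi.single_apply,
        smul_eq_mul]
      simp [hij, hij.symm, hli]
      field_simp
      ring
    · simp only [Matrix.mulVec_diagonal, Pi.add_apply, Pi.smul_apply, Pi.single_apply,
        smul_eq_mul]
      simp [hli, hlj]

theorem good_diag_pair {p₁ p₂ : Fin m → ℂ} (hall : ∀ k, p₁ k ≠ p₂ k) {i j : Fin m}
    (hij : i ≠ j) {a : ℂ} (ha : a ≠ 0) :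
    Good p₁ p₂ (Matrix.diagonal (fun l => if l = i then a else if l = j then a⁻¹ else 1)) 1 := by
  rw [diag_pair_eq_transvections hij ha]
  have g1 := good_transvection hij (hall j) a
  have g2 := good_transvection (Ne.symm hij) (hall i) (-a⁻¹)
  have g3 := good_transvection hij (hall j) (a - 1)
  have g4 := good_transvection (Ne.symm hij) (hall i) (1 : ℂ)
  have g5 := good_transvection hij (hall j) (-1 : ℂ)
  have := good_mul g1 (good_mul g2 (good_mul g3 (good_mul g4 g5)))
  simpa using this

theorem good_diagonal {p₁ p₂ : Fin m → ℂ} (hall : ∀ k, p₁ k ≠ p₂ k) :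
    ∀ (n : ℕ) (d : Fin m → ℂ), (Finset.univ.filter fun l => d l ≠ 1).card ≤ n →
    (∀ l, d l ≠ 0) → ∏ l, d l = 1 → Good p₁ p₂ (Matrix.diagonal d) 1 := by
  intro n
  induction n with
  | zero =>
    intro d hcard _ _
    have h1 : ∀ l, d l = 1 := by
      intro l; by_contra h
      have hl : l ∈ Finset.univ.filter (fun l => d l ≠ 1) := by simp [h]
      have := Finset.card_pos.2 ⟨l, hl⟩; omega
    have : d = fun _ => 1 := funext h1
    rw [this]
    simpa [Matrix.diagonal_one] using good_one p₁ p₂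
  | succ n IH =>
    intro d hcard hnz hprod
    set t := Finset.univ.filter (fun l => d l ≠ 1) with ht
    by_cases h0 : t.card = 0
    · exact IH d (by rw [← ht]; omega) hnz hprod
    obtain ⟨i, hi⟩ := Finset.card_pos.1 (show 0 < t.card by omega)
    have hdi : d i ≠ 1 := (Finset.mem_filter.1 hi).2
    have hoff : ∀ l, l ∉ t → d l = 1 := by
      intro l hl; by_contra h; exact hl (by simp [ht, h])
    have h2 : ∃ j ∈ t, j ≠ i := by
      by_contra hcon
      push_neg at hcon
      have hsub : t ⊆ {i} := fun x hx => Finset.mem_singleton.2 (hcon x hx)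
      have hteq : t = {i} := Finset.Subset.antisymm hsub (by simpa using hi)
      have : ∏ l, d l = ∏ l ∈ t, d l :=
        (Finset.prod_subset (Finset.subset_univ t) (fun x _ hx => hoff x hx)).symm
      rw [hteq, Finset.prod_singleton, hprod] at this
      exact hdi this.symm
    obtain ⟨j, hjt, hji⟩ := h2
    set d' : Fin m → ℂ := Function.update (Function.update d i 1) j (d j * d i) with hd'
    have hd'i : d' i = 1 := by
      rw [hd', Function.update_of_ne (Ne.symm hji), Function.update_self]
    have hd'j : d' j = d j * d i := by rw [hd', Function.update_self]
    have hd'other : ∀ l, l ≠ i → l ≠ j → d' l = d l := by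
      intro l hli hlj
      rw [hd', Function.update_of_ne hlj, Function.update_of_ne hli]
    have key : Matrix.diagonal d = Matrix.diagonal d' *
        Matrix.diagonal (fun l => if l = i then d i else if l = j then (d i)⁻¹ else 1) := by
      rw [Matrix.diagonal_mul_diagonal]
      refine congrArg Matrix.diagonal (funext fun l => ?_)
      rcases eq_or_ne l i with rfl | hli
      · simp [Pi.mul_apply, hd'i]
      · rcases eq_or_ne l j with rfl | hlj
        · simp [Pi.mul_apply, hd'j, hli, mul_assoc, mul_inv_cancel₀ (hnz i)]
        · simp [Pi.mul_apply, hd'other l hli hlj, hli, hlj]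
    have hcard' : (Finset.univ.filter fun l => d' l ≠ 1).card ≤ n := by
      have hsub : (Finset.univ.filter fun l => d' l ≠ 1) ⊆ t.erase i := by
        intro l hl
        have hl1 : d' l ≠ 1 := (Finset.mem_filter.1 hl).2
        have hli : l ≠ i := by rintro rfl; exact hl1 hd'i
        refine Finset.mem_erase.2 ⟨hli, ?_⟩
        rcases eq_or_ne l j with rfl | hlj
        · exact hjt
        · rw [ht]
          refine Finset.mem_filter.2 ⟨Finset.mem_univ l, ?_⟩
          rw [← hd'other l hli hlj]
          exact hl1
      have := Finset.card_le_card hsub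
      rw [Finset.card_erase_of_mem hi] at this
      omega
    have hnz' : ∀ l, d' l ≠ 0 := by
      intro l
      rcases eq_or_ne l i with rfl | hli
      · rw [hd'i]; exact one_ne_zero
      · rcases eq_or_ne l j with heq | hlj
        · rw [heq, hd'j]; exact mul_ne_zero (hnz _) (hnz i)
        · rw [hd'other l hli hlj]; exact hnz l
    have hprod' : ∏ l, d' l = 1 := by
      have e2 : ∏ l, d' l = (d j * d i) *
          (1 * ∏ l ∈ (Finset.univ \ {j}) \ {i}, d l) := by
        rw [hd', Finset.prod_update_of_mem (Finset.mem_univ j),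
          Finset.prod_update_of_mem
            (Finset.mem_sdiff.2 ⟨Finset.mem_univ i, by simp [Ne.symm hji]⟩)]
      have e1 : (1 : ℂ) = d j * (d i * ∏ l ∈ (Finset.univ \ {j}) \ {i}, d l) := by
        simp only [← Finset.erase_eq]
        rw [← hprod, ← Finset.mul_prod_erase Finset.univ d (Finset.mem_univ j),
          ← Finset.mul_prod_erase _ d (Finset.mem_erase.2 ⟨Ne.symm hji, Finset.mem_univ i⟩)]
      rw [e2, one_mul, e1]
      ring
    rw [key]
    have := good_mul (IH d' hcard' hnz' hprod') (good_diag_pair hall (Ne.symm hji) (hnz i))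
    simpa using this

theorem good_transvec_list {p₁ p₂ : Fin m → ℂ} (hall : ∀ k, p₁ k ≠ p₂ k) :
    ∀ L : List (Matrix.TransvectionStruct (Fin m) ℂ),
      Good p₁ p₂ (L.map Matrix.TransvectionStruct.toMatrix).prod 1
  | [] => by simpa using good_one p₁ p₂
  | t :: L => by
    have h1 : Good p₁ p₂ t.toMatrix 1 := by
      rcases t with ⟨i, j, hij, c⟩
      simpa [Matrix.TransvectionStruct.toMatrix_mk] using good_transvection hij (hall j) c
    have := good_mul h1 (good_transvec_list hall L)
    simpa using this

theorem good_det_one {p₁ p₂ : Fin m → ℂ} (hall : ∀ k, p₁ k ≠ p₂ k)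
    {A : Matrix (Fin m) (Fin m) ℂ} (hA : A.det = 1) : Good p₁ p₂ A 1 := by
  obtain ⟨L, L', D, hD⟩ := Matrix.Pivot.exists_list_transvec_mul_diagonal_mul_list_transvec A
  have hdet : ∏ l, D l = 1 := by
    rw [hD] at hA
    simpa [Matrix.det_mul, Matrix.TransvectionStruct.det_toMatrix_prod,
      Matrix.det_diagonal] using hA
  have hnz : ∀ l, D l ≠ 0 := by
    intro l h0
    rw [Finset.prod_eq_zero (Finset.mem_univ l) h0] at hdet
    exact zero_ne_one hdet
  rw [hD]
  have hmid := good_diagonal hall _ D le_rfl hnz hdet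
  have := good_mul (good_mul (good_transvec_list hall L) hmid) (good_transvec_list hall L')
  simpa using this

theorem good_all {p₁ p₂ : Fin m → ℂ} (hall : ∀ k, p₁ k ≠ p₂ k)
    {A₁ A₂ : Matrix (Fin m) (Fin m) ℂ} (h₁ : A₁.det = 1) (h₂ : A₂.det = 1) :
    Good p₁ p₂ A₁ A₂ := by
  have g1 : Good p₁ p₂ A₁ 1 := good_det_one hall h₁
  have g2 : Good p₁ p₂ 1 A₂ := good_swap (good_det_one (fun k => (hall k).symm) h₂)
  simpa using good_mul g1 g2


theorem isPolyMap_translate (v : Fin m → ℂ) : IsPolyMap (fun x : Fin m → ℂ => x + v) :=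
  ⟨fun t => MvPolynomial.X t + MvPolynomial.C (v t), fun x t => by simp⟩

theorem isPolyMap_mulVec (M : Matrix (Fin m) (Fin m) ℂ) :
    IsPolyMap (fun x : Fin m → ℂ => M.mulVec x) :=
  ⟨fun t => ∑ s, MvPolynomial.C (M t s) * MvPolynomial.X s, fun x t => by
    simp [Matrix.mulVec, dotProduct]⟩

theorem good_translate {p₁ p₂ : Fin m → ℂ} {A₁ A₂ : Matrix (Fin m) (Fin m) ℂ} (v : Fin m → ℂ)
    (h : Good (p₁ + v) (p₂ + v) A₁ A₂) : Good p₁ p₂ A₁ A₂ := by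
  obtain ⟨φ', ψ', h1, h2, h3, h4, h5, h6, h7, h8⟩ := h
  refine ⟨fun x => φ' (x + v) - v, fun x => ψ' (x + v) - v, ?_, ?_, ?_, ?_, ?_, ?_, ?_, ?_⟩
  · have : (fun x : Fin m → ℂ => φ' (x + v) - v) =
        ((fun x : Fin m → ℂ => x + (-v)) ∘ φ') ∘ (fun x : Fin m → ℂ => x + v) := by
      funext x; simp [sub_eq_add_neg]
    rw [this]
    exact isPolyMap_comp (isPolyMap_comp (isPolyMap_translate (-v)) h1) (isPolyMap_translate v)
  · have : (fun x : Fin m → ℂ => ψ' (x + v) - v) =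
        ((fun x : Fin m → ℂ => x + (-v)) ∘ ψ') ∘ (fun x : Fin m → ℂ => x + v) := by
      funext x; simp [sub_eq_add_neg]
    rw [this]
    exact isPolyMap_comp (isPolyMap_comp (isPolyMap_translate (-v)) h2) (isPolyMap_translate v)
  · funext x
    have := congrFun h3 (x + v)
    simp only [Function.comp_apply, id_eq] at this ⊢
    rw [sub_add_cancel, this]
    abel
  · funext x
    have := congrFun h4 (x + v)
    simp only [Function.comp_apply, id_eq] at this ⊢
    rw [sub_add_cancel, this]
    abel
  · show φ' (p₁ + v) - v = p₁
    rw [h5]; abel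
  · show φ' (p₂ + v) - v = p₂
    rw [h6]; abel
  · have ha : HasFDerivAt (fun x : Fin m → ℂ => x + v)
        (ContinuousLinearMap.id ℂ (Fin m → ℂ)) p₁ := (hasFDerivAt_id p₁).add_const v
    exact hasFDerivAt_matrix ((h7.comp p₁ ha).sub_const v) (fun x => by simp)
  · have ha : HasFDerivAt (fun x : Fin m → ℂ => x + v)
        (ContinuousLinearMap.id ℂ (Fin m → ℂ)) p₂ := (hasFDerivAt_id p₂).add_const v
    exact hasFDerivAt_matrix ((h8.comp p₂ ha).sub_const v) (fun x => by simp)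

theorem hasFDerivAt_mulVec (M : Matrix (Fin m) (Fin m) ℂ) (p : Fin m → ℂ) :
    HasFDerivAt (fun x : Fin m → ℂ => M.mulVec x)
      (LinearMap.toContinuousLinearMap (Matrix.mulVecLin M)) p := by
  have heq : ⇑(LinearMap.toContinuousLinearMap (Matrix.mulVecLin M)) =
      fun x : Fin m → ℂ => M.mulVec x := by funext x; simp
  rw [← heq]
  exact (LinearMap.toContinuousLinearMap (Matrix.mulVecLin M)).hasFDerivAt

theorem good_linear {p₁ p₂ : Fin m → ℂ} {A₁ A₂ : Matrix (Fin m) (Fin m) ℂ}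
    (C C' : Matrix (Fin m) (Fin m) ℂ) (h1 : C * C' = 1) (h2 : C' * C = 1)
    (h : Good (C.mulVec p₁) (C.mulVec p₂) (C * A₁ * C') (C * A₂ * C')) :
    Good p₁ p₂ A₁ A₂ := by
  obtain ⟨φ', ψ', hp1, hp2, hp3, hp4, hp5, hp6, hp7, hp8⟩ := h
  have hCC' : ∀ y : Fin m → ℂ, C.mulVec (C'.mulVec y) = y := by
    intro y; rw [Matrix.mulVec_mulVec, h1, Matrix.one_mulVec]
  have hC'C : ∀ y : Fin m → ℂ, C'.mulVec (C.mulVec y) = y := by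
    intro y; rw [Matrix.mulVec_mulVec, h2, Matrix.one_mulVec]
  have hconj : ∀ A : Matrix (Fin m) (Fin m) ℂ, C' * (C * A * C') * C = A := by
    intro A
    simp only [← Matrix.mul_assoc]
    rw [h2, one_mul, Matrix.mul_assoc, h2, Matrix.mul_one]
  refine ⟨fun x => C'.mulVec (φ' (C.mulVec x)), fun x => C'.mulVec (ψ' (C.mulVec x)),
    ?_, ?_, ?_, ?_, ?_, ?_, ?_, ?_⟩
  · exact isPolyMap_comp (isPolyMap_comp (isPolyMap_mulVec C') hp1) (isPolyMap_mulVec C)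
  · exact isPolyMap_comp (isPolyMap_comp (isPolyMap_mulVec C') hp2) (isPolyMap_mulVec C)
  · funext x
    have hx := congrFun hp3 (C.mulVec x)
    simp only [Function.comp_apply, id_eq] at hx ⊢
    rw [hCC', hx, hC'C]
  · funext x
    have hx := congrFun hp4 (C.mulVec x)
    simp only [Function.comp_apply, id_eq] at hx ⊢
    rw [hCC', hx, hC'C]
  · show C' *ᵥ φ' (C *ᵥ p₁) = p₁
    rw [hp5, hC'C]
  · show C' *ᵥ φ' (C *ᵥ p₂) = p₂
    rw [hp6, hC'C]
  · have d2 := hp7.comp p₁ (hasFDerivAt_mulVec C p₁)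
    have d3 := (hasFDerivAt_mulVec C' ((fun x => φ' (C.mulVec x)) p₁)).comp p₁ d2
    refine hasFDerivAt_matrix d3 (fun x => ?_)
    simp only [ContinuousLinearMap.coe_comp', Function.comp_apply,
      LinearMap.coe_toContinuousLinearMap', Matrix.mulVecLin_apply]
    rw [Matrix.mulVec_mulVec, Matrix.mulVec_mulVec, hconj]
  · have d2 := hp8.comp p₂ (hasFDerivAt_mulVec C p₂)
    have d3 := (hasFDerivAt_mulVec C' ((fun x => φ' (C.mulVec x)) p₂)).comp p₂ d2
    refine hasFDerivAt_matrix d3 (fun x => ?_)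
    simp only [ContinuousLinearMap.coe_comp', Function.comp_apply,
      LinearMap.coe_toContinuousLinearMap', Matrix.mulVecLin_apply]
    rw [Matrix.mulVec_mulVec, Matrix.mulVec_mulVec, hconj]

theorem exists_conj {v : Fin m → ℂ} (hv : v ≠ 0) :
    ∃ C C' : Matrix (Fin m) (Fin m) ℂ,
      C * C' = 1 ∧ C' * C = 1 ∧ C.mulVec v = fun _ => 1 := by
  obtain ⟨k, hk⟩ : ∃ k, v k ≠ 0 := by
    by_contra h; push_neg at h; exact hv (funext h)
  set u : Fin m → ℂ := (v k)⁻¹ • ((fun _ => 1) - v) with hu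
  set w : Fin m → ℂ := Pi.single k 1 with hw
  set V := Matrix.vecMulVec u w with hV
  have hVmul : ∀ b : Fin m → ℂ, V * Matrix.vecMulVec b w = b k • V := by
    intro b
    ext r s
    rw [Matrix.mul_apply]
    rw [Finset.sum_eq_single k]
    · simp [hV, Matrix.vecMulVec_apply, hw, Pi.single_eq_same]
      ring
    · intro x _ hx
      simp [hV, Matrix.vecMulVec_apply, hw, Pi.single_eq_of_ne hx]
    · intro hcon
      exact absurd (Finset.mem_univ k) hcon
  have hV'eq : Matrix.vecMulVec ((v k) • u) w = (v k) • V := by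
    ext r s
    simp [Matrix.vecMulVec_apply, hV]
    ring
  have huk : v k * u k = 1 - v k := by
    rw [hu]
    simp only [Pi.smul_apply, Pi.sub_apply, smul_eq_mul]
    field_simp
  have hVV : V * V = u k • V := hVmul u
  have e1 : V * Matrix.vecMulVec ((v k) • u) w = (v k * u k) • V := by
    rw [hVmul]
    simp [smul_smul]
  refine ⟨1 + V, 1 - Matrix.vecMulVec ((v k) • u) w, ?_, ?_, ?_⟩
  · calc (1 + V) * (1 - Matrix.vecMulVec ((v k) • u) w)
        = 1 - Matrix.vecMulVec ((v k) • u) w + (V - V * Matrix.vecMulVec ((v k) • u) w) := by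
          rw [add_mul, one_mul, mul_sub, mul_one]
      _ = 1 - (v k) • V + (V - (v k * u k) • V) := by rw [e1, hV'eq]
      _ = 1 - (v k) • V + (V - (1 - v k) • V) := by rw [huk]
      _ = 1 := by module
  · calc (1 - Matrix.vecMulVec ((v k) • u) w) * (1 + V)
        = 1 + V - (Matrix.vecMulVec ((v k) • u) w + Matrix.vecMulVec ((v k) • u) w * V) := by
          rw [sub_mul, one_mul, mul_add, mul_one]
      _ = 1 + V - ((v k) • V + (v k) • (u k • V)) := by
          rw [hV'eq, Matrix.smul_mul, hVV]
      _ = 1 + V - ((v k) • V + (v k * u k) • V) := by rw [smul_smul]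
      _ = 1 + V - ((v k) • V + (1 - v k) • V) := by rw [huk]
      _ = 1 := by module
  · have hVv : V.mulVec v = (v k) • u := by
      funext l
      rw [Matrix.mulVec, dotProduct, Finset.sum_eq_single k]
      · simp [hV, Matrix.vecMulVec_apply, hw, Pi.single_eq_same]
        ring
      · intro x _ hx
        simp [hV, Matrix.vecMulVec_apply, hw, Pi.single_eq_of_ne hx]
      · intro hcon
        exact absurd (Finset.mem_univ k) hcon
    have hvu : (v k) • u = (fun _ => (1:ℂ)) - v := by
      rw [hu, smul_smul, mul_inv_cancel₀ hk, one_smul]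
    funext l
    rw [Matrix.add_mulVec, Matrix.one_mulVec, hVv, hvu]
    simp

theorem good_main {p₁ p₂ : Fin m → ℂ} (hp : p₁ ≠ p₂) {A₁ A₂ : Matrix (Fin m) (Fin m) ℂ}
    (hA₁ : A₁.det = 1) (hA₂ : A₂.det = 1) : Good p₁ p₂ A₁ A₂ := by
  have hv : p₂ - p₁ ≠ 0 := sub_ne_zero.2 (Ne.symm hp)
  obtain ⟨C, C', h1, h2, hCv⟩ := exists_conj hv
  apply good_translate (-p₁)
  apply good_linear C C' h1 h2
  have hq1 : C.mulVec (p₁ + -p₁) = 0 := by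
    rw [show p₁ + -p₁ = 0 by abel, Matrix.mulVec_zero]
  have hq2 : C.mulVec (p₂ + -p₁) = fun _ => 1 := by
    rw [show p₂ + -p₁ = p₂ - p₁ by abel]
    exact hCv
  rw [hq1, hq2]
  have h3 : C.det * C'.det = 1 := by rw [← Matrix.det_mul, h1, Matrix.det_one]
  apply good_all
  · intro k
    simp only [Pi.zero_apply]
    exact zero_ne_one
  · calc (C * A₁ * C').det = C.det * A₁.det * C'.det := by rw [Matrix.det_mul, Matrix.det_mul]
      _ = 1 := by rw [hA₁, mul_one, h3]
  · calc (C * A₂ * C').det = C.det * A₂.det * C'.det := by rw [Matrix.det_mul, Matrix.det_mul]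
      _ = 1 := by rw [hA₂, mul_one, h3]

end LemA2

/-- Lemma A.2 of the paper: given `m ≥ 2`, distinct points `p₁ p₂ ∈ ℂ^m` and
matrices `A₁, A₂ ∈ SL_m(ℂ)`, there is an algebraic (polynomial) automorphism `φ`
of `ℂ^m` fixing `p₁` and `p₂` whose differentials at `p₁` and `p₂` are `A₁` and `A₂`. -/
theorem stmt0 (m : ℕ) (hm : 2 ≤ m) (p₁ p₂ : Fin m → ℂ) (hp : p₁ ≠ p₂)
    (A₁ A₂ : Matrix (Fin m) (Fin m) ℂ) (hA₁ : A₁.det = 1) (hA₂ : A₂.det = 1) :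
    ∃ φ ψ : (Fin m → ℂ) → (Fin m → ℂ),
      IsPolyMap φ ∧ IsPolyMap ψ ∧ ψ ∘ φ = id ∧ φ ∘ ψ = id ∧
      φ p₁ = p₁ ∧ φ p₂ = p₂ ∧
      HasFDerivAt φ (LinearMap.toContinuousLinearMap (Matrix.mulVecLin A₁)) p₁ ∧
      HasFDerivAt φ (LinearMap.toContinuousLinearMap (Matrix.mulVecLin A₂)) p₂ :=
  LemA2.good_main hp hA₁ hA₂
end

section
/- Let X ⊆ ℂ^m be a closed algebraic subvariety, let 1 ≤ k < m, and let ω_k(X) ⊆ Gr_k(ℂ^m) be the set of k-dimensional linear subspaces V for which there exists a sequence {x^j} ⊆ X with |x^j| → ∞ and lim_{j→∞} π(x^j) ⊆ V, where π : ℂ^m \ {0} → ℙ^{m−1} is the canonical projection. Then for every V ∈ Gr_k(ℂ^m) \ ω_k(X), the restricted linear projection p_V|_X : X → ℂ^m / V is a proper map. -/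
/-- A subset of `ℂ^σ` is an (affine) algebraic set if it is the common zero locus
of a set of polynomials. -/
def IsAlgSet {σ : Type*} (S : Set (σ → ℂ)) : Prop :=
  ∃ T : Set (MvPolynomial σ ℂ), S = {x | ∀ P ∈ T, MvPolynomial.eval x P = 0}

open Filter in
/-- Part of Lemma 3.7: let `X ⊆ ℂ^m` be a closed algebraic subvariety, `1 ≤ k < m`
and `V` a `k`-dimensional linear subspace not in `ω_k(X)`, i.e. there is no sequence
in `X` going to infinity whose limit direction (in `ℙ^{m-1}`) lies in `V`.  Then
the projection `p_V|_X : X → ℂ^m/V` is proper: preimages of compact sets are compact.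
(Convergence of directions `π(x^j) → [v]` is expressed by the existence of scalars
`c j` with `c j • x j → v`.) -/
theorem stmt5 (m k : ℕ) (hk1 : 1 ≤ k) (hkm : k < m)
    (X : Set (Fin m → ℂ)) (hX : IsAlgSet X)
    (V : Submodule ℂ (Fin m → ℂ)) (hV : Module.finrank ℂ V = k)
    (hout : ¬ ∃ x : ℕ → (Fin m → ℂ), (∀ j, x j ∈ X) ∧
        Tendsto (fun j => ‖x j‖) atTop atTop ∧
        ∃ v, v ∈ V ∧ v ≠ 0 ∧ ∃ c : ℕ → ℂ,
          Tendsto (fun j => c j • x j) atTop (nhds v)) :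
    ∀ K : Set ((Fin m → ℂ) ⧸ V), IsCompact K →
      IsCompact {x : Fin m → ℂ | x ∈ X ∧ Submodule.Quotient.mk x ∈ K} := by
  intro K hK
  -- X is closed
  have hXc : IsClosed X := by
    obtain ⟨T, rfl⟩ := hX
    have : {x : Fin m → ℂ | ∀ P ∈ T, MvPolynomial.eval x P = 0}
        = ⋂ P ∈ T, {x | MvPolynomial.eval x P = 0} := by
      ext x; simp [Set.mem_iInter]
    rw [this]
    exact isClosed_biInter fun P _ =>
      isClosed_eq (MvPolynomial.continuous_eval P) continuous_const
  have hmk : Continuous (V.mkQ) := LinearMap.continuous_of_finiteDimensional _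
  have hSc : IsClosed {x : Fin m → ℂ | x ∈ X ∧ Submodule.Quotient.mk x ∈ K} := by
    haveI : IsClosed (V : Set (Fin m → ℂ)) := Submodule.closed_of_finiteDimensional V
    have : {x : Fin m → ℂ | x ∈ X ∧ Submodule.Quotient.mk x ∈ K}
        = X ∩ (V.mkQ ⁻¹' K) := rfl
    rw [this]
    exact hXc.inter (hK.isClosed.preimage hmk)
  refine Metric.isCompact_of_isClosed_isBounded hSc ?_
  by_contra hb
  rw [isBounded_iff_forall_norm_le] at hb
  push_neg at hb
  choose x hxS hxn using fun j : ℕ => hb (j : ℝ)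
  have hxpos : ∀ j, 0 < ‖x j‖ := fun j =>
    lt_of_le_of_lt (Nat.cast_nonneg j) (hxn j)
  have htend : Tendsto (fun j => ‖x j‖) atTop atTop :=
    tendsto_atTop_mono (fun j => (hxn j).le) tendsto_natCast_atTop_atTop
  set u : ℕ → (Fin m → ℂ) := fun j => ‖x j‖⁻¹ • x j with hu
  have humem : ∀ j, u j ∈ Metric.sphere (0 : Fin m → ℂ) 1 := by
    intro j
    simp only [mem_sphere_zero_iff_norm, hu, norm_smul, norm_inv, norm_norm]
    exact inv_mul_cancel₀ (hxpos j).ne'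
  obtain ⟨v, hvmem, φ, hφ, hconv⟩ :=
    (isCompact_sphere (0 : Fin m → ℂ) 1).tendsto_subseq humem
  have hvnorm : ‖v‖ = 1 := mem_sphere_zero_iff_norm.mp hvmem
  have hvne : v ≠ 0 := by intro h; rw [h, norm_zero] at hvnorm; norm_num at hvnorm
  -- bound on K
  obtain ⟨C, hC⟩ := hK.isBounded.exists_norm_le
  have hC0 : 0 ≤ C := le_trans (norm_nonneg _) (hC _ (hxS 0).2)
  -- v ∈ V
  have hmkv : ‖(Submodule.Quotient.mk v : (Fin m → ℂ) ⧸ V)‖ = 0 := by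
    have hle : ∀ j, ‖(Submodule.Quotient.mk v : (Fin m → ℂ) ⧸ V)‖
        ≤ ‖v - u (φ j)‖ + ‖x (φ j)‖⁻¹ * C := by
      intro j
      have h1 : (Submodule.Quotient.mk v : (Fin m → ℂ) ⧸ V)
          = Submodule.Quotient.mk (v - u (φ j)) + Submodule.Quotient.mk (u (φ j)) := by
        rw [← Submodule.Quotient.mk_add]; congr 1; abel
      have hxeq : u (φ j) = ((‖x (φ j)‖⁻¹ : ℝ) : ℂ) • x (φ j) := by
        rw [hu,
          show ((‖x (φ j)‖⁻¹ : ℝ) : ℂ) = algebraMap ℝ ℂ (‖x (φ j)‖⁻¹) from rfl,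
          algebraMap_smul]
      have h2 : (Submodule.Quotient.mk (u (φ j)) : (Fin m → ℂ) ⧸ V)
          = ((‖x (φ j)‖⁻¹ : ℝ) : ℂ) • Submodule.Quotient.mk (x (φ j)) := by
        rw [hxeq]; exact Submodule.Quotient.mk_smul V _ _
      calc ‖(Submodule.Quotient.mk v : (Fin m → ℂ) ⧸ V)‖
          ≤ ‖(Submodule.Quotient.mk (v - u (φ j)) : (Fin m → ℂ) ⧸ V)‖
            + ‖(Submodule.Quotient.mk (u (φ j)) : (Fin m → ℂ) ⧸ V)‖ := by
            rw [h1]; exact norm_add_le _ _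
        _ ≤ ‖v - u (φ j)‖ + ‖x (φ j)‖⁻¹ * C := by
            gcongr
            · exact Submodule.Quotient.norm_mk_le V _
            · rw [h2]
              refine le_trans (norm_smul_le (α := ℂ) (β := (Fin m → ℂ) ⧸ V)
                ((‖x (φ j)‖⁻¹ : ℝ) : ℂ) (Submodule.Quotient.mk (x (φ j)))) ?_
              rw [Complex.norm_real, norm_inv, norm_norm]
              have hKC := hC _ (hxS (φ j)).2
              gcongr
    have hlim : Tendsto (fun j => ‖v - u (φ j)‖ + ‖x (φ j)‖⁻¹ * C) atTop (nhds 0) := by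
      have h1 : Tendsto (fun j => ‖v - u (φ j)‖) atTop (nhds 0) := by
        have := hconv.sub_const v
        have h0 : Tendsto (fun j => u (φ j) - v) atTop (nhds 0) := by
          simpa using this
        have := h0.norm
        simp only [norm_zero] at this
        simpa [norm_sub_rev] using this
      have h2 : Tendsto (fun j => ‖x (φ j)‖⁻¹ * C) atTop (nhds 0) := by
        have hx2 : Tendsto (fun j => ‖x (φ j)‖) atTop atTop :=
          htend.comp (StrictMono.tendsto_atTop hφ)
        simpa using hx2.inv_tendsto_atTop.mul_const C
      simpa using h1.add h2
    have hle0 : ‖(Submodule.Quotient.mk v : (Fin m → ℂ) ⧸ V)‖ ≤ 0 :=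
      ge_of_tendsto' hlim hle
    exact le_antisymm hle0 (norm_nonneg _)
  have hvV : v ∈ V := by
    have := (QuotientAddGroup.norm_mk_eq_zero_iff_mem_closure (S := V.toAddSubgroup) (m := v)).mp hmkv
    rw [Submodule.coe_toAddSubgroup] at this
    rwa [IsClosed.closure_eq (Submodule.closed_of_finiteDimensional V)] at this
  -- contradict hout
  refine hout ⟨fun j => x (φ j), fun j => (hxS (φ j)).1,
    htend.comp (StrictMono.tendsto_atTop hφ), v, hvV, hvne,
    fun j => ((‖x (φ j)‖⁻¹ : ℝ) : ℂ), ?_⟩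
  have : ∀ j, ((‖x (φ j)‖⁻¹ : ℝ) : ℂ) • x (φ j) = u (φ j) := by
    intro j
    rw [hu]
    rw [show ((‖x (φ j)‖⁻¹ : ℝ) : ℂ) = algebraMap ℝ ℂ (‖x (φ j)‖⁻¹) from rfl,
      algebraMap_smul]
  simpa only [this, Function.comp_def] using hconv
end

section
/- Let 2 ≤ p < q be coprime positive integers. The map f_{p,q} : ℂ* → ℂ² given by x ↦ (x^p, x^{−q}) is a proper injective algebraic immersion (hence a closed algebraic embedding of ℂ* into ℂ²). -/
/-- For coprime integers `2 ≤ p < q`, the map `f_{p,q} : ℂ* → ℂ²`, `x ↦ (x^p, x^{-q})`,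
is a proper injective algebraic immersion (hence a closed algebraic embedding of `ℂ*`
into `ℂ²`). -/
theorem stmt12 (p q : ℕ) (hp : 2 ≤ p) (hpq : p < q) (hco : Nat.Coprime p q) :
    IsProperMap (fun z : {z : ℂ // z ≠ 0} =>
      ((z.val ^ p, z.val ^ (-(q : ℤ))) : ℂ × ℂ)) ∧
    Function.Injective (fun z : {z : ℂ // z ≠ 0} =>
      ((z.val ^ p, z.val ^ (-(q : ℤ))) : ℂ × ℂ)) ∧
    ∀ z : ℂ, z ≠ 0 → deriv (fun w : ℂ => ((w ^ p, w ^ (-(q : ℤ))) : ℂ × ℂ)) z ≠ 0 := by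
  have hp0 : 0 < p := by omega
  have hq0 : 0 < q := by omega
  set f : {z : ℂ // z ≠ 0} → ℂ × ℂ :=
    fun z => ((z.val ^ p, z.val ^ (-(q : ℤ))) : ℂ × ℂ) with hf
  have hcont : Continuous f := by
    apply Continuous.prodMk
    · exact continuous_subtype_val.pow p
    · have : (fun z : {z : ℂ // z ≠ 0} => z.val ^ (-(q : ℤ)))
          = fun z : {z : ℂ // z ≠ 0} => (z.val ^ q)⁻¹ := by
        funext z
        rw [zpow_neg, zpow_natCast]
      rw [this]
      exact (continuous_subtype_val.pow q).inv₀ (fun z => pow_ne_zero q z.2)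
  refine ⟨?_, ?_, ?_⟩
  · -- properness
    rw [isProperMap_iff_isCompact_preimage]
    refine ⟨hcont, fun K hK => ?_⟩
    obtain ⟨r, hr⟩ := hK.isBounded.subset_closedBall 0
    set R : ℝ := max r 1 with hR
    have hR1 : (1:ℝ) ≤ R := le_max_right _ _
    have hR0 : (0:ℝ) < R := lt_of_lt_of_le one_pos hR1
    have hsub : f ⁻¹' K ⊆ Subtype.val ⁻¹'
        (Metric.closedBall (0:ℂ) R ∩ {z : ℂ | R⁻¹ ≤ ‖z‖}) := by
      intro z hz
      have hzK := hr hz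
      rw [Metric.mem_closedBall, dist_zero_right] at hzK
      have hb : ‖f z‖ ≤ R := le_trans hzK (le_max_left _ _)
      have h1 : ‖z.val ^ p‖ ≤ R := le_trans (norm_fst_le (f z)) hb
      have h2 : ‖z.val ^ (-(q:ℤ))‖ ≤ R := le_trans (norm_snd_le (f z)) hb
      rw [norm_pow] at h1
      rw [norm_zpow, zpow_neg, zpow_natCast] at h2
      have hz0 : (0:ℝ) < ‖z.val‖ := norm_pos_iff.mpr z.2
      constructor
      · rw [Metric.mem_closedBall, dist_zero_right]
        by_contra hlt
        push_neg at hlt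
        have h1le : (1:ℝ) ≤ ‖z.val‖ := le_trans hR1 hlt.le
        have : ‖z.val‖ ≤ ‖z.val‖ ^ p := le_self_pow₀ h1le (by omega)
        linarith
      · show R⁻¹ ≤ ‖z.val‖
        by_contra hlt
        push_neg at hlt
        have hle1 : ‖z.val‖ ≤ 1 := le_trans hlt.le (inv_le_one_of_one_le₀ hR1)
        have hq1 : ‖z.val‖ ^ q ≤ ‖z.val‖ := pow_le_of_le_one hz0.le hle1 (by omega)
        have hq2 : ‖z.val‖ ^ q < R⁻¹ := lt_of_le_of_lt hq1 hlt
        have : R < (‖z.val‖ ^ q)⁻¹ := by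
          rw [lt_inv_comm₀ hR0 (pow_pos hz0 q)]
          exact hq2
        linarith
    have hA : IsCompact (Metric.closedBall (0:ℂ) R ∩ {z : ℂ | R⁻¹ ≤ ‖z‖}) :=
      (isCompact_closedBall _ _).inter_right (isClosed_le continuous_const continuous_norm)
    have hApre : IsCompact ((Subtype.val : {z : ℂ // z ≠ 0} → ℂ) ⁻¹'
        (Metric.closedBall (0:ℂ) R ∩ {z : ℂ | R⁻¹ ≤ ‖z‖})) := by
      apply Topology.IsInducing.subtypeVal.isCompact_preimage' hA
      intro w hw
      have hw0 : w ≠ 0 := by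
        rintro rfl
        simp only [Set.mem_inter_iff, Set.mem_setOf_eq, norm_zero] at hw
        exact absurd hw.2 (not_le.mpr (inv_pos.mpr hR0))
      exact ⟨⟨w, hw0⟩, rfl⟩
    exact hApre.of_isClosed_subset (hK.isClosed.preimage hcont) hsub
  · -- injectivity
    intro a b hab
    simp only [hf, Prod.mk.injEq] at hab
    obtain ⟨h1, h2⟩ := hab
    have h2' : a.val ^ q = b.val ^ q := by
      rw [zpow_neg, zpow_neg, inv_inj, zpow_natCast, zpow_natCast] at h2
      exact h2
    set u : ℂ := a.val * (b.val)⁻¹ with hu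
    have hup : u ^ p = 1 := by
      rw [hu, mul_pow, inv_pow, h1, mul_inv_cancel₀ (pow_ne_zero p b.2)]
    have huq : u ^ q = 1 := by
      rw [hu, mul_pow, inv_pow, h2', mul_inv_cancel₀ (pow_ne_zero q b.2)]
    have hd : orderOf u ∣ Nat.gcd p q :=
      Nat.dvd_gcd (orderOf_dvd_of_pow_eq_one hup) (orderOf_dvd_of_pow_eq_one huq)
    rw [hco] at hd
    have : u = 1 := orderOf_eq_one_iff.mp (Nat.dvd_one.mp hd)
    exact Subtype.ext ((mul_inv_eq_one₀ b.2).mp this)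
  · -- immersion
    intro z hz
    have hd1 : HasDerivAt (fun w : ℂ => w ^ p) ((p : ℂ) * z ^ (p - 1)) z := by
      simpa using hasDerivAt_pow p z
    have hd2 := hasDerivAt_zpow (-(q:ℤ)) z (Or.inl hz)
    have hD := hd1.prodMk hd2
    rw [hD.deriv]
    intro h
    rw [Prod.ext_iff] at h
    have := h.1
    simp only [Prod.fst_zero] at this
    have hpz : (p : ℂ) ≠ 0 := Nat.cast_ne_zero.mpr (by omega)
    exact (mul_ne_zero hpz (pow_ne_zero _ hz)) this
end
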